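/- For every real number x > 0, ∑_{k=1}^∞ (−1)^{k+1} ( coth(kx) − 1 ) = ∑_{k=1}^∞ ( 1 − tanh(kx) ). -/

import Mathlib

/-- The real hyperbolic cotangent. -/
noncomputable def Real.coth (x : ℝ) : ℝ := Real.cosh x / Real.sinh x

noncomputable def cf (y : ℝ) : ℝ := 2 / (Real.exp (2*y) - 1)

lemma one_lt_exp' {y : ℝ} (hy : 0 < y) : (1:ℝ) < Real.exp y := by
  calc (1:ℝ) = Real.exp 0 := (Real.exp_zero).symm
  _ < Real.exp y := Real.exp_lt_exp.mpr hy

lemma cf_nonneg {y : ℝ} (hy : 0 < y) : 0 ≤ cf y := by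
  have h := one_lt_exp' (show (0:ℝ) < 2*y by linarith)
  have : (0:ℝ) < Real.exp (2*y) - 1 := by linarith
  exact le_of_lt (div_pos two_pos this)

section main
variable (x : ℝ) (hx : 0 < x)

noncomputable def F (x : ℝ) (k : ℕ) : ℝ := cf (((k:ℝ)+1) * x)

include hx

lemma F_nonneg (k : ℕ) : 0 ≤ F x k := cf_nonneg (by positivity)

lemma F_summable : Summable (F x) := by
  set R := Real.exp (2*x) with hRdef
  have hR : 1 < R := one_lt_exp' (by linarith)
  have hR0 : 0 < R := by linarith
  have hinv : R⁻¹ < 1 := by rw [inv_lt_one_iff₀]; right; exact hR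
  have hbound : ∀ k : ℕ, F x k ≤ (2/(R-1)) * (R⁻¹)^k := by
    intro k
    have hpow : Real.exp (2*(((k:ℝ)+1) * x)) = R^(k+1) := by
      rw [hRdef, ← Real.exp_nat_mul]
      congr 1
      push_cast
      ring
    have hRk : (1:ℝ) ≤ R^k := one_le_pow₀ hR.le
    have h1 : R^k * (R-1) ≤ R^(k+1) - 1 := by
      rw [pow_succ]; nlinarith
    have h2 : 0 < R^k * (R-1) := mul_pos (pow_pos hR0 k) (by linarith)
    have hle : F x k ≤ 2 / (R^k * (R-1)) := by
      rw [F, cf, hpow]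
      exact div_le_div_of_nonneg_left (by norm_num) h2 h1
    calc F x k ≤ 2 / (R^k * (R-1)) := hle
      _ = (2/(R-1)) * (R⁻¹)^k := by
          rw [inv_pow, mul_comm (R^k), div_mul_eq_div_div, div_eq_mul_inv]
  exact Summable.of_nonneg_of_le (F_nonneg x hx) hbound
    ((summable_geometric_of_lt_one (by positivity) hinv).mul_left _)

lemma F_odd_summable : Summable (fun k => F x (2*k+1)) :=
  (F_summable x hx).comp_injective (fun a b h => by omega)

lemma F_alt_summable : Summable (fun k => (-1:ℝ)^k * F x k) := by
  apply Summable.of_abs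
  apply (F_summable x hx).congr
  intro k
  simp [abs_mul, abs_of_nonneg (F_nonneg x hx k)]

lemma key1 : ∑' k, F x k - ∑' k, (-1:ℝ)^k * F x k = 2 * ∑' k, F x (2*k+1) := by
  rw [← Summable.tsum_sub (F_summable x hx) (F_alt_summable x hx)]
  have hi : Function.Injective (fun k : ℕ => 2*k+1) := by
    intro a b h
    simp only [] at h
    omega
  have hzero : ∀ n ∉ Set.range (fun k : ℕ => 2*k+1),
      F x n - (-1:ℝ)^n * F x n = 0 := by
    intro n hn
    have hne : Even n := by
      rcases Nat.even_or_odd n with h | h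
      · exact h
      · obtain ⟨m, hm⟩ := h
        exact absurd ⟨m, show 2*m+1 = n by omega⟩ hn
    rw [hne.neg_one_pow]; ring
  have hsupp : (Function.support fun n => F x n - (-1:ℝ)^n * F x n)
      ⊆ Set.range (fun k : ℕ => 2*k+1) := by
    intro n hn
    by_contra hc
    exact hn (hzero n hc)
  have heq := hi.tsum_eq (f := fun n => F x n - (-1:ℝ)^n * F x n) hsupp
  rw [← heq, ← tsum_mul_left]
  apply tsum_congr
  intro k
  have hodd : Odd (2*k+1) := ⟨k, by ring⟩
  show F x (2*k+1) - (-1:ℝ)^(2*k+1) * F x (2*k+1) = 2 * F x (2*k+1)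
  rw [hodd.neg_one_pow]
  ring
end main

lemma coth_sub_one (y : ℝ) (hy : 0 < y) : Real.coth y - 1 = cf y := by
  have hey1 : (1:ℝ) < Real.exp y := one_lt_exp' hy
  have h2 : Real.exp (2*y) = Real.exp y * Real.exp y := by rw [two_mul, Real.exp_add]
  have hey : 0 < Real.exp y := Real.exp_pos y
  have h1 : Real.exp y * Real.exp y - 1 ≠ 0 := by nlinarith
  have hinv : (Real.exp y)⁻¹ < 1 := by rw [inv_lt_one_iff₀]; right; exact hey1
  have hs : Real.exp y - (Real.exp y)⁻¹ ≠ 0 := by nlinarith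
  rw [Real.coth, cf, h2, Real.sinh_eq, Real.cosh_eq, Real.exp_neg]
  have he2 : Real.exp y ^ 2 - 1 ≠ 0 := by nlinarith
  field_simp
  ring

lemma one_sub_tanh (y : ℝ) (hy : 0 < y) : 1 - Real.tanh y = cf y - 2 * cf (2*y) := by
  have hey1 : (1:ℝ) < Real.exp y := one_lt_exp' hy
  have h2 : Real.exp (2*y) = Real.exp y * Real.exp y := by rw [two_mul, Real.exp_add]
  have h4 : Real.exp (2*(2*y)) = Real.exp (2*y) * Real.exp (2*y) := by rw [two_mul, Real.exp_add]
  have hey : 0 < Real.exp y := Real.exp_pos y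
  have h1 : Real.exp y * Real.exp y - 1 ≠ 0 := by nlinarith
  have h1' : Real.exp y * Real.exp y * (Real.exp y * Real.exp y) - 1 ≠ 0 := by nlinarith [mul_pos hey hey, sq_nonneg (Real.exp y * Real.exp y - 1)]
  have hc : Real.exp y + (Real.exp y)⁻¹ ≠ 0 := by positivity
  rw [Real.tanh_eq_sinh_div_cosh, cf, cf, h4, h2, Real.sinh_eq, Real.cosh_eq, Real.exp_neg]
  have he2 : Real.exp y ^ 2 - 1 ≠ 0 := by nlinarith
  have he4 : Real.exp y ^ 4 - 1 ≠ 0 := by nlinarith [mul_pos hey hey, sq_nonneg (Real.exp y * Real.exp y - 1)]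
  field_simp
  ring

theorem stmt7 (x : ℝ) (hx : 0 < x) :
    ∑' k : ℕ, (-1 : ℝ) ^ ((k + 1) + 1) * (Real.coth (((k : ℝ) + 1) * x) - 1)
      = ∑' k : ℕ, (1 - Real.tanh (((k : ℝ) + 1) * x)) := by
  have hL : ∑' k : ℕ, (-1 : ℝ) ^ ((k + 1) + 1) * (Real.coth (((k : ℝ) + 1) * x) - 1)
      = ∑' k : ℕ, (-1:ℝ)^k * F x k := by
    apply tsum_congr
    intro k
    rw [coth_sub_one _ (by positivity)]
    have hp : (-1:ℝ)^((k+1)+1) = (-1:ℝ)^k := by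
      rw [pow_succ, pow_succ]; ring
    rw [hp]
    rfl
  have hR : ∑' k : ℕ, (1 - Real.tanh (((k : ℝ) + 1) * x))
      = ∑' k : ℕ, (F x k - 2 * F x (2*k+1)) := by
    apply tsum_congr
    intro k
    rw [one_sub_tanh _ (by positivity)]
    have : cf (2*(((k:ℝ)+1)*x)) = F x (2*k+1) := by
      rw [F]
      congr 1
      push_cast
      ring
    rw [this]
    rfl
  rw [hL, hR, Summable.tsum_sub (F_summable x hx) ((F_odd_summable x hx).mul_left 2),
    tsum_mul_left]
  linarith [key1 x hx]
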